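/- The function f is not differentiable at t = 16/3, but f is differentiable at t = 4/3 and differentiable at t = 64/3. -/

import Mathlib

/-- The inverse hyperbolic tangent. -/
noncomputable def artanh (x : ℝ) : ℝ := (1 / 2) * Real.log ((1 + x) / (1 - x))

/-- `θ(t) = artanh √(1 - 1/t)`. -/
noncomputable def tenTheta (t : ℝ) : ℝ := artanh (Real.sqrt (1 - 1 / t))

/-- The piecewise function `g` with `f(t) = (8/(33 t²)) g(t)` for `t ≥ 1`. -/
noncomputable def tenG (t : ℝ) : ℝ :=
  if t < 2 then 4 * Real.log t
  else if t < 3 then 12 * Real.log t - 8 * Real.log 2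
  else if t < 4 then 15 * Real.log t - 8 * Real.log 2 - 3 * Real.log 3
  else if t < 16 / 3 then
    16 * Real.log t - 10 * Real.log 2 - 3 * Real.log 3 - 8 * tenTheta (t / 4)
  else if t < 6 then
    16 * Real.log t - 10 * Real.log 2 - 3 * Real.log 3 - 8 * tenTheta (t / 4)
      - 4 * tenTheta (3 * t / 16)
  else if t < 8 then
    12 * Real.log t - 8 * Real.log 2 + Real.log 3 - 8 * tenTheta (t / 4)
      - 4 * tenTheta (t / 6)
  else if t < 9 then
    10 * Real.log t - 2 * Real.log 2 - Real.log 3 - 8 * tenTheta (t / 4)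
      - 12 * tenTheta (t / 8)
  else if t < 32 / 3 then
    10 * Real.log t - 4 * Real.log 2 - Real.log 3 - 8 * tenTheta (t / 4)
      - 8 * tenTheta (t / 8)
  else if t < 12 then
    10 * Real.log t - 4 * Real.log 2 - Real.log 3 - 8 * tenTheta (t / 4)
      - 8 * tenTheta (t / 8) - 4 * tenTheta (3 * t / 32)
  else if t < 16 then
    9 * Real.log t - 4 * Real.log 2 - 8 * tenTheta (t / 4) - 8 * tenTheta (t / 8)
      - 4 * tenTheta (t / 12)
  else
    9 * Real.log t - 4 * Real.log 2 - Real.log 3 - 8 * tenTheta (t / 4)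
      - 8 * tenTheta (t / 8) - 2 * tenTheta (t / 12)

/-- The slope gap distribution pdf of the balanced ten-tile origami. -/
noncomputable def tenTilePdf (t : ℝ) : ℝ :=
  if t < 1 then 0 else 8 / (33 * t ^ 2) * tenG t

lemma tenTheta_one : tenTheta 1 = 0 := by
  simp [tenTheta, artanh]

lemma artanh_diffAt {x : ℝ} (h0 : -1 < x) (h1 : x < 1) : DifferentiableAt ℝ artanh x := by
  have h2 : (1:ℝ) - x ≠ 0 := by intro h; nlinarith
  have h3 : (1 + x) / (1 - x) ≠ 0 := by
    apply div_ne_zero (by intro h; nlinarith) h2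
  unfold artanh
  exact (((differentiableAt_const (1:ℝ)).add differentiableAt_fun_id).div
    ((differentiableAt_const (1:ℝ)).sub differentiableAt_fun_id) h2 |>.log h3).const_mul _

lemma sqrt_arg_pos {t : ℝ} (ht : 1 < t) : 0 < 1 - 1 / t := by
  have : 1 / t < 1 := by rw [div_lt_one (by linarith)]; linarith
  linarith

lemma sqrt_lt_one' {t : ℝ} (ht : 1 < t) : Real.sqrt (1 - 1 / t) < 1 := by
  rw [Real.sqrt_lt' one_pos]
  have : 0 < 1 / t := by positivity
  nlinarith

lemma tenTheta_diffAt {t : ℝ} (ht : 1 < t) : DifferentiableAt ℝ tenTheta t := by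
  have h0 : t ≠ 0 := by linarith
  have hinner : DifferentiableAt ℝ (fun t : ℝ => Real.sqrt (1 - 1 / t)) t := by
    apply DifferentiableAt.sqrt
    · exact (differentiableAt_const (1:ℝ)).sub ((differentiableAt_const (1:ℝ)).div differentiableAt_fun_id h0)
    · exact ne_of_gt (sqrt_arg_pos ht)
  have := (artanh_diffAt (lt_of_lt_of_le neg_one_lt_zero (Real.sqrt_nonneg _))
    (sqrt_lt_one' ht)).comp t hinner
  exact this

lemma artanh_lower {s : ℝ} (h0 : 0 ≤ s) (h1 : s < 1) : s / 2 ≤ artanh s := by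
  unfold artanh
  have hlog : Real.log (1 - s) ≤ -s := by
    have := Real.log_le_sub_one_of_pos (x := 1 - s) (by linarith)
    linarith
  have hlog2 : 0 ≤ Real.log (1 + s) := Real.log_nonneg (by linarith)
  rw [Real.log_div (by linarith) (by linarith)]
  linarith

lemma tenTheta_lower {x : ℝ} (hx : 1 < x) : Real.sqrt (1 - 1 / x) / 2 ≤ tenTheta x :=
  artanh_lower (Real.sqrt_nonneg _) (sqrt_lt_one' hx)

lemma coeff_diffAt {t : ℝ} (ht : t ≠ 0) : DifferentiableAt ℝ (fun t : ℝ => 8 / (33 * t ^ 2)) t := by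
  exact (differentiableAt_const (8:ℝ)).div (by fun_prop) (by positivity)

lemma theta_comp_diffAt {c t : ℝ} (hc : c ≠ 0) (ht : 1 < t / c) :
    DifferentiableAt ℝ (fun t : ℝ => tenTheta (t / c)) t :=
  DifferentiableAt.comp (g := tenTheta) t (tenTheta_diffAt ht) (differentiableAt_fun_id.div_const c)

lemma diff_at_four_thirds : DifferentiableAt ℝ tenTilePdf (4 / 3) := by
  have heq : tenTilePdf =ᶠ[nhds (4/3 : ℝ)] fun t => 8 / (33 * t ^ 2) * (4 * Real.log t) := by
    filter_upwards [(isOpen_Ioo (a := (1:ℝ)) (b := 2)).mem_nhds (by norm_num)] with t ht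
    rw [tenTilePdf, if_neg (by linarith [ht.1]), tenG, if_pos ht.2]
  rw [heq.differentiableAt_iff]
  exact (coeff_diffAt (by norm_num)).mul
    ((Real.differentiableAt_log (by norm_num)).const_mul 4)

lemma diff_at_big : DifferentiableAt ℝ tenTilePdf (64 / 3) := by
  have heq : tenTilePdf =ᶠ[nhds (64/3 : ℝ)] fun t =>
      8 / (33 * t ^ 2) * (9 * Real.log t - 4 * Real.log 2 - Real.log 3 - 8 * tenTheta (t / 4)
        - 8 * tenTheta (t / 8) - 2 * tenTheta (t / 12)) := by
    filter_upwards [(isOpen_Ioi (a := (16:ℝ))).mem_nhds (by norm_num)] with t ht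
    simp only [Set.mem_Ioi] at ht
    rw [tenTilePdf, if_neg (by linarith), tenG, if_neg (by linarith), if_neg (by linarith),
      if_neg (by linarith), if_neg (by linarith), if_neg (by linarith), if_neg (by linarith),
      if_neg (by linarith), if_neg (by linarith), if_neg (by linarith), if_neg (by linarith)]
  rw [heq.differentiableAt_iff]
  refine (coeff_diffAt (by norm_num)).mul ?_
  refine ((((((Real.differentiableAt_log (by norm_num)).const_mul 9).sub
    (differentiableAt_const _)).sub (differentiableAt_const _)).sub
    ((theta_comp_diffAt (by norm_num) (by norm_num)).const_mul 8)).sub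
    ((theta_comp_diffAt (by norm_num) (by norm_num)).const_mul 8)).sub
    ((theta_comp_diffAt (by norm_num) (by norm_num)).const_mul 2)

/-- The smooth extension from the left of `16/3`. -/
noncomputable def tenF (t : ℝ) : ℝ :=
  8 / (33 * t ^ 2) * (16 * Real.log t - 10 * Real.log 2 - 3 * Real.log 3 - 8 * tenTheta (t / 4))

lemma tenF_diffAt : DifferentiableAt ℝ tenF (16 / 3) := by
  refine (coeff_diffAt (by norm_num)).mul ?_
  exact ((((Real.differentiableAt_log (by norm_num)).const_mul 16).sub
    (differentiableAt_const _)).sub (differentiableAt_const _)).sub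
    ((theta_comp_diffAt (by norm_num) (by norm_num)).const_mul 8)

lemma pdf_left (t : ℝ) (h4 : 4 < t) (ha : t < 16 / 3) : tenTilePdf t = tenF t := by
  rw [tenTilePdf, if_neg (by linarith), tenG, if_neg (by linarith), if_neg (by linarith),
    if_neg (by linarith), if_pos ha, tenF]

lemma pdf_right (t : ℝ) (h4 : 16 / 3 ≤ t) (ha : t < 6) :
    tenTilePdf t = tenF t - 32 / (33 * t ^ 2) * tenTheta (3 * t / 16) := by
  rw [tenTilePdf, if_neg (by linarith), tenG, if_neg (by linarith), if_neg (by linarith),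
    if_neg (by linarith), if_neg (by linarith), if_pos ha, tenF]
  ring

lemma pdf_at_a : tenTilePdf (16 / 3) = tenF (16 / 3) := by
  rw [pdf_right (16/3) le_rfl (by norm_num)]
  norm_num [tenTheta_one]

lemma not_diff_at_a : ¬ DifferentiableAt ℝ tenTilePdf (16 / 3) := by
  intro hd
  have hda : DifferentiableAt ℝ (fun t => tenTilePdf t - tenF t) (16/3 : ℝ) := hd.sub tenF_diffAt
  set h : ℝ → ℝ := fun t => tenTilePdf t - tenF t with hh
  have hder : HasDerivAt h (deriv h (16/3)) (16/3 : ℝ) := hda.hasDerivAt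
  have hslope := hasDerivAt_iff_tendsto_slope.mp hder
  have hha : h (16/3) = 0 := by
    show tenTilePdf (16/3) - tenF (16/3) = 0
    rw [pdf_at_a]; ring
  -- left limit: slope is eventually 0
  have hleft : Filter.Tendsto (slope h (16/3)) (nhdsWithin (16/3 : ℝ) (Set.Iio (16/3)))
      (nhds (deriv h (16/3))) :=
    hslope.mono_left (nhdsWithin_mono _ fun x hx => ne_of_lt hx)
  have hleft0 : slope h (16/3) =ᶠ[nhdsWithin (16/3 : ℝ) (Set.Iio (16/3))] (fun _ => (0:ℝ)) := by
    filter_upwards [Ioo_mem_nhdsLT_of_mem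
      (show (16/3 : ℝ) ∈ Set.Ioc (4:ℝ) (16/3) by constructor <;> norm_num)] with t ht
    have h0 : h t = 0 := by
      show tenTilePdf t - tenF t = 0
      rw [pdf_left t ht.1 ht.2]; ring
    rw [slope_def_field, h0, hha]; simp
  have hd0 : deriv h (16/3) = 0 :=
    tendsto_nhds_unique (hleft.congr' hleft0) tendsto_const_nhds
  -- right limit
  have hright : Filter.Tendsto (slope h (16/3)) (nhdsWithin (16/3 : ℝ) (Set.Ioi (16/3)))
      (nhds 0) := by
    rw [← hd0]
    exact hslope.mono_left (nhdsWithin_mono _ fun x hx => ne_of_gt hx)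
  have hev1 : ∀ᶠ t in nhdsWithin (16/3 : ℝ) (Set.Ioi (16/3)), -1 < slope h (16/3) t :=
    hright.eventually (eventually_gt_nhds (by norm_num))
  have hev2 : ∀ᶠ t in nhdsWithin (16/3 : ℝ) (Set.Ioi (16/3)), slope h (16/3) t ≤ -1 := by
    filter_upwards [Ioo_mem_nhdsGT_of_mem
      (show (16/3 : ℝ) ∈ Set.Ico (16/3 : ℝ) (16/3 + 1/1000000) by constructor <;> norm_num)]
      with t ht
    obtain ⟨ht1, ht2⟩ := ht
    have ht6 : t < 6 := by linarith
    have htpos : (0:ℝ) < t := by linarith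
    have hx : (1:ℝ) < 3 * t / 16 := by linarith
    have hinv : (1:ℝ) / (3 * t / 16) = 16 / (3 * t) := by field_simp
    set s : ℝ := Real.sqrt (1 - 16 / (3 * t)) with hs
    have hsnn : 0 ≤ s := Real.sqrt_nonneg _
    have hs2 : s ^ 2 = 1 - 16 / (3 * t) := by
      rw [hs]; exact Real.sq_sqrt (by have := sqrt_arg_pos hx; rw [hinv] at this; linarith)
    have hth : s / 2 ≤ tenTheta (3 * t / 16) := by
      have := tenTheta_lower hx
      rwa [hinv] at this
    have hkey : s ^ 2 * (3 * t) = 3 * t - 16 := by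
      rw [hs2]; field_simp
    -- bound s
    have hssmall : s ≤ 2 / 891 := by
      have h1 : s ^ 2 ≤ 3 * (1/1000000) / 16 := by nlinarith [sq_nonneg s]
      nlinarith [sq_nonneg (s - 2/891)]
    -- main estimate
    have hcoeff : (8:ℝ) / 297 ≤ 32 / (33 * t ^ 2) := by
      rw [div_le_div_iff₀ (by norm_num) (by positivity)]
      nlinarith
    have hthnn : 0 ≤ tenTheta (3 * t / 16) := le_trans (by positivity) hth
    have hmain : t - 16/3 ≤ 32 / (33 * t ^ 2) * tenTheta (3 * t / 16) := by
      have h1 : (8:ℝ)/297 * (s / 2) ≤ 32 / (33 * t ^ 2) * tenTheta (3 * t / 16) :=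
        mul_le_mul hcoeff hth (by positivity) (by positivity)
      have h2 : t - 16/3 = t * s ^ 2 := by nlinarith [hkey]
      have hts : t * s ≤ 4 / 297 := by
        nlinarith [mul_nonneg (by linarith : (0:ℝ) ≤ 6 - t) hsnn]
      have h3 : t * s ^ 2 ≤ (8:ℝ)/297 * (s / 2) := by
        nlinarith [mul_nonneg hsnn (sub_nonneg.mpr hts)]
      linarith
    -- conclude slope ≤ -1
    have hht : h t = -(32 / (33 * t ^ 2) * tenTheta (3 * t / 16)) := by
      show tenTilePdf t - tenF t = _
      rw [pdf_right t (le_of_lt ht1) ht6]; ring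
    rw [slope_def_field, hht, hha]
    rw [div_le_iff₀ (by linarith : (0:ℝ) < t - 16/3)]
    linarith
  obtain ⟨t, hgt, hle⟩ := (hev1.and hev2).exists
  linarith

/-- The ten-tile slope gap pdf is not differentiable at `16/3`, but is differentiable at
`4/3` and at `64/3`. -/
theorem tenTile_differentiability_at_sixteen_thirds :
    ¬ DifferentiableAt ℝ tenTilePdf (16 / 3) ∧
    DifferentiableAt ℝ tenTilePdf (4 / 3) ∧
    DifferentiableAt ℝ tenTilePdf (64 / 3) :=
  ⟨not_diff_at_a, diff_at_four_thirds, diff_at_big⟩
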